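/- Under the stated conditions, −∫ log(p/p₀) dP₀ ≤ (3 + M) · h(p,p₀)², where the left-hand side is interpreted in the extended reals. -/

import Mathlib

open Real

theorem helperL1 {a : ℝ} (ha : 1 ≤ a) : 2 * Real.log a ≤ a - a⁻¹ := by
  have hx : 0 ≤ Real.log a := Real.log_nonneg ha
  have h : Real.log a ≤ Real.sinh (Real.log a) := by
    rcases eq_or_lt_of_le hx with h0 | h0
    · simp [← h0]
    · exact (Real.self_lt_sinh_iff.mpr h0).le
  have hexp : Real.exp (Real.log a) = a := Real.exp_log (by linarith)
  rw [Real.sinh_eq, hexp, Real.exp_neg, hexp] at h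
  linarith

theorem helperLog {u : ℝ} (hu : 0 < u) : 1 - u⁻¹ ≤ Real.log u := by
  have := Real.log_le_sub_one_of_pos (x := u⁻¹) (by positivity)
  rw [Real.log_inv] at this
  linarith

/-- key upper bound: for `0 < u`, `-log u ≤ (1-u)/√u` expressed via `w = √u`. -/
theorem helperNegLog {u : ℝ} (hu : 0 < u) (hu1 : u ≤ 1) :
    -Real.log u ≤ (Real.sqrt u)⁻¹ - Real.sqrt u := by
  set w := Real.sqrt u with hw
  have hw0 : 0 < w := Real.sqrt_pos.mpr hu
  have hw2 : w^2 = u := Real.sq_sqrt hu.le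
  have h1 : w ≤ 1 := by nlinarith
  have ha : 1 ≤ w⁻¹ := by rw [le_inv_comm₀ one_pos hw0]; simpa using h1
  have h := helperL1 ha
  rw [Real.log_inv, inv_inv] at h
  have hlogu : Real.log u = 2 * Real.log w := by
    rw [← hw2, Real.log_pow]; push_cast; ring
  linarith

-- P1 : for u ≥ 2/3, g ≤ 2(1-u)²
theorem helperP1 {u : ℝ} (hu : (2:ℝ)/3 ≤ u) :
    2*(u - 1 - Real.log u) ≤ 2*(1-u)^2 := by
  have hu0 : 0 < u := by linarith
  rcases le_or_gt 1 u with h1 | h1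
  · have hlog := helperLog hu0
    have hinv : u * u⁻¹ = 1 := mul_inv_cancel₀ (ne_of_gt hu0)
    have hinvle : u⁻¹ ≤ 1 := by rw [inv_le_one_iff₀]; right; exact h1
    nlinarith [sq_nonneg (u-1)]
  · set w := Real.sqrt u with hw
    have hw0 : 0 < w := Real.sqrt_pos.mpr hu0
    have hw2 : w^2 = u := Real.sq_sqrt hu0.le
    have hw1 : w ≤ 1 := by nlinarith
    have hwu : (2:ℝ)/3 ≤ w := by nlinarith
    have h := helperNegLog hu0 h1.le
    rw [← hw] at h
    -- w⁻¹ ≤ 2 - u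
    have hk : 1 ≤ w * (2 - u) := by nlinarith
    have hinv_le : w⁻¹ ≤ 2 - u := by
      rw [inv_le_iff_one_le_mul₀ hw0]
      linarith [hk]
    have hfact : w⁻¹ - w = (1-u)*w⁻¹ := by
      field_simp
      nlinarith
    have : -Real.log u ≤ (1-u)*(2-u) := by
      rw [hfact] at h
      calc -Real.log u ≤ (1-u)*w⁻¹ := h
        _ ≤ (1-u)*(2-u) := by
            apply mul_le_mul_of_nonneg_left hinv_le (by linarith)
    nlinarith

-- P3 : for 0 < u ≤ 1, g ≤ 2(1-u)² + (1-u)/(2u)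
theorem helperP3 {u : ℝ} (hu0 : 0 < u) (hu1 : u ≤ 1) :
    2*(u - 1 - Real.log u) ≤ 2*(1-u)^2 + (1-u)/(2*u) := by
  have h := helperNegLog hu0 hu1
  set w := Real.sqrt u with hw
  have hw0 : 0 < w := Real.sqrt_pos.mpr hu0
  have hw2 : w^2 = u := Real.sq_sqrt hu0.le
  have hw1 : w ≤ 1 := by nlinarith
  have key : 2*(u - 1) + 2*(w⁻¹ - w) ≤ 2*(1-u)^2 + (1-u)/(2*u) := by
    rw [← hw2]
    have hne : w ≠ 0 := ne_of_gt hw0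
    rw [← sub_nonneg]
    have expand : 2*(1-w^2)^2 + (1-w^2)/(2*w^2) - (2*(w^2-1) + 2*(w⁻¹ - w))
        = (1-w^2) * ((1-2*w)^2 + 4*w^2*(1-w^2)) / (2*w^2) := by
      field_simp
      ring
    rw [expand]
    apply div_nonneg _ (by positivity)
    have h1 : 0 ≤ 1 - w^2 := by nlinarith
    have h2 : 0 ≤ (1-2*w)^2 + 4*w^2*(1-w^2) := by positivity
    exact mul_nonneg h1 h2
  linarith

-- P2 : on A, with s ∈ (0,1/2], u ≤ 1/(1+s)
theorem helperP2 {u s : ℝ} (hu0 : 0 < u) (hs0 : 0 < s) (hs1 : s ≤ 1/2)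
    (hu1 : u ≤ 1/(1+s)) :
    2*(u - 1 - Real.log u) ≤
      2*(1-u)^2 + (1+s)^2/(4*s)*(1-u)^2 + s/(4*(1+s)^2) * (u^2)⁻¹ := by
  have hu1' : u ≤ 1 := le_trans hu1 (by rw [div_le_one (by linarith)]; linarith)
  have hamgm : (1-u)/(2*u) ≤ (1+s)^2/(4*s)*(1-u)^2 + s/(4*(1+s)^2) * (u^2)⁻¹ := by
    rw [← sub_nonneg]
    have expand : (1+s)^2/(4*s)*(1-u)^2 + s/(4*(1+s)^2) * (u^2)⁻¹ - (1-u)/(2*u)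
        = ((1+s)^2*(1-u)*u - s)^2 / (4*s*(1+s)^2*u^2) := by
      field_simp
      ring
    rw [expand]
    positivity
  have := helperP3 hu0 hu1'
  linarith

open MeasureTheory ENNReal

set_option maxHeartbeats 2000000 in
/-- Lemma (KL bounded by squared Hellinger): under the stated conditions,
`-∫ log(p/p₀) dP₀ ≤ (3 + M) · h(p,p₀)²`, the left-hand side being interpreted in the
extended reals (positive part minus negative part of the integral of `-log(p/p₀)`). -/
theorem neg_integral_log_ratio_le_hellinger
    {X : Type*} [MeasurableSpace X] (μ : Measure X) [SigmaFinite μ]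
    (p p₀ : X → ℝ) (hp : Measurable p) (hp₀ : Measurable p₀)
    (hpnn : ∀ x, 0 ≤ p x) (hp₀nn : ∀ x, 0 ≤ p₀ x)
    (hpden : ∫⁻ x, ENNReal.ofReal (p x) ∂μ = 1)
    (hp₀den : ∫⁻ x, ENNReal.ofReal (p₀ x) ∂μ = 1)
    (P₀ : Measure X) (hP₀ : P₀ = μ.withDensity fun x => ENNReal.ofReal (p₀ x))
    (hzero : P₀ {x | p x = 0} = 0)
    (hfin : ∫⁻ x, ENNReal.ofReal (p₀ x / p x) ∂P₀ < ⊤)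
    (M : ℝ) (hM : 0 ≤ M)
    (hMbound : ∃ c : ℝ, 1 ≤ c ∧
      (P₀ {x | (1 + 1 / (2 * c)) ^ 2 ≤ p₀ x / p x} = 0 ∨
        ENNReal.ofReal c *
            (∫⁻ x in {x | (1 + 1 / (2 * c)) ^ 2 ≤ p₀ x / p x},
              ENNReal.ofReal (p₀ x / p x) ∂P₀) ≤
          ENNReal.ofReal M * P₀ {x | (1 + 1 / (2 * c)) ^ 2 ≤ p₀ x / p x})) :
    ((∫⁻ x, ENNReal.ofReal (-Real.log (p x / p₀ x)) ∂P₀ : ℝ≥0∞) : EReal) -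
        ((∫⁻ x, ENNReal.ofReal (Real.log (p x / p₀ x)) ∂P₀ : ℝ≥0∞) : EReal) ≤
      ((3 + M : ℝ) : EReal) *
        ((∫⁻ x, ENNReal.ofReal ((Real.sqrt (p x) - Real.sqrt (p₀ x)) ^ 2) ∂μ : ℝ≥0∞) :
          EReal) := by
  classical
  -- a.e. positivity facts
  have hpmeasset : MeasurableSet {x | p x = 0} := hp (measurableSet_singleton 0)
  have haep : ∀ᵐ x ∂P₀, 0 < p x := by
    rw [ae_iff]
    convert hzero using 2
    ext x
    simp only [Set.mem_setOf_eq, not_lt]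
    constructor
    · intro h; exact le_antisymm h (hpnn x)
    · intro h; exact h.le
  have haep₀ : ∀ᵐ x ∂P₀, 0 < p₀ x := by
    rw [ae_iff]
    have hset : MeasurableSet {x | p₀ x = 0} := hp₀ (measurableSet_singleton 0)
    have : P₀ {x | p₀ x = 0} = 0 := by
      rw [hP₀, withDensity_apply _ hset]
      calc ∫⁻ x in {x | p₀ x = 0}, ENNReal.ofReal (p₀ x) ∂μ
          = ∫⁻ _ in {x | p₀ x = 0}, 0 ∂μ := by
            apply setLIntegral_congr_fun hset
            intro x hx
            simp only [Set.mem_setOf_eq] at hx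
            simp [hx]
        _ = 0 := lintegral_zero
    convert this using 2
    ext x
    simp only [Set.mem_setOf_eq, not_lt]
    constructor
    · intro h; exact le_antisymm h (hp₀nn x)
    · intro h; exact h.le
  haveI hprob : IsProbabilityMeasure P₀ := by
    constructor
    rw [hP₀, withDensity_apply _ MeasurableSet.univ, Measure.restrict_univ]
    exact hp₀den
  obtain ⟨c, hc, hcond⟩ := hMbound
  have hc0 : 0 < c := lt_of_lt_of_le one_pos hc
  set s : ℝ := 1/(2*c) with hs_def
  have hs0 : 0 < s := by positivity
  have hs1 : s ≤ 1/2 := by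
    rw [hs_def, div_le_div_iff₀ (by positivity) (by norm_num)]
    linarith
  set u : X → ℝ := fun x => Real.sqrt (p x / p₀ x) with hu_def
  set g : X → ℝ := fun x => 2*(u x - 1 - Real.log (u x)) with hg_def
  -- measurability
  have hu_m : Measurable u := Real.continuous_sqrt.measurable.comp (hp.div hp₀)
  have hg_m : Measurable g :=
    ((hu_m.sub measurable_const).sub (Real.measurable_log.comp hu_m)).const_mul 2
  have hf_m : Measurable fun x => -Real.log (p x / p₀ x) :=
    (Real.measurable_log.comp (hp.div hp₀)).neg
  -- integrability over μ
  have h_int_p : Integrable p μ := by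
    refine ⟨hp.aestronglyMeasurable, ?_⟩
    rw [hasFiniteIntegral_iff_ofReal (Filter.Eventually.of_forall hpnn), hpden]
    exact one_lt_top
  have h_int_p₀ : Integrable p₀ μ := by
    refine ⟨hp₀.aestronglyMeasurable, ?_⟩
    rw [hasFiniteIntegral_iff_ofReal (Filter.Eventually.of_forall hp₀nn), hp₀den]
    exact one_lt_top
  have hq_m : Measurable fun x => Real.sqrt (p x * p₀ x) :=
    Real.continuous_sqrt.measurable.comp (hp.mul hp₀)
  have hq_le : ∀ x, Real.sqrt (p x * p₀ x) ≤ (p x + p₀ x)/2 := by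
    intro x
    nlinarith [Real.sqrt_mul (hpnn x) (p₀ x), Real.sq_sqrt (hpnn x), Real.sq_sqrt (hp₀nn x),
      sq_nonneg (Real.sqrt (p x) - Real.sqrt (p₀ x)), Real.sqrt_nonneg (p x * p₀ x)]
  have h_int_q : Integrable (fun x => Real.sqrt (p x * p₀ x)) μ := by
    apply Integrable.mono ((h_int_p.add h_int_p₀).div_const 2) hq_m.aestronglyMeasurable
    apply Filter.Eventually.of_forall
    intro x
    rw [Real.norm_eq_abs, Real.norm_eq_abs, abs_of_nonneg (Real.sqrt_nonneg _)]
    refine le_trans (hq_le x) (le_abs_self _)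
  have hel_eq : ∀ x, (Real.sqrt (p x) - Real.sqrt (p₀ x))^2
      = p x + p₀ x - 2 * Real.sqrt (p x * p₀ x) := by
    intro x
    rw [sub_sq, Real.sq_sqrt (hpnn x), Real.sq_sqrt (hp₀nn x), Real.sqrt_mul (hpnn x)]
    ring
  have h_int_hel : Integrable (fun x => (Real.sqrt (p x) - Real.sqrt (p₀ x))^2) μ :=
    ((h_int_p.add h_int_p₀).sub (h_int_q.const_mul 2)).congr
      (Filter.Eventually.of_forall fun x => (hel_eq x).symm)
  have hIp : ∫ x, p x ∂μ = 1 := by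
    rw [integral_eq_lintegral_of_nonneg_ae (Filter.Eventually.of_forall hpnn)
      hp.aestronglyMeasurable, hpden]
    simp
  have hIp₀ : ∫ x, p₀ x ∂μ = 1 := by
    rw [integral_eq_lintegral_of_nonneg_ae (Filter.Eventually.of_forall hp₀nn)
      hp₀.aestronglyMeasurable, hp₀den]
    simp
  set Hr : ℝ := ∫ x, (Real.sqrt (p x) - Real.sqrt (p₀ x))^2 ∂μ with hHr_def
  have hHr_eq : Hr = 2 - 2*∫ x, Real.sqrt (p x * p₀ x) ∂μ := by
    rw [hHr_def]
    calc ∫ x, (Real.sqrt (p x) - Real.sqrt (p₀ x))^2 ∂μ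
        = ∫ x, (p x + p₀ x - 2 * Real.sqrt (p x * p₀ x)) ∂μ :=
          integral_congr_ae (Filter.Eventually.of_forall hel_eq)
      _ = (∫ x, p x ∂μ) + (∫ x, p₀ x ∂μ) - 2*∫ x, Real.sqrt (p x * p₀ x) ∂μ := by
          have hadd : Integrable (fun x => p x + p₀ x) μ := h_int_p.add h_int_p₀
          have hmul : Integrable (fun x => 2 * Real.sqrt (p x * p₀ x)) μ :=
            h_int_q.const_mul 2
          rw [integral_sub hadd hmul, integral_add h_int_p h_int_p₀, integral_const_mul]
      _ = 2 - 2*∫ x, Real.sqrt (p x * p₀ x) ∂μ := by rw [hIp, hIp₀]; ring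
  have hHr_nonneg : 0 ≤ Hr := integral_nonneg (fun x => sq_nonneg _)
  have hHL : (∫⁻ x, ENNReal.ofReal ((Real.sqrt (p x) - Real.sqrt (p₀ x))^2) ∂μ)
      = ENNReal.ofReal Hr :=
    (ofReal_integral_eq_lintegral_ofReal h_int_hel
      (Filter.Eventually.of_forall fun x => sq_nonneg _)).symm
  -- outer reduction
  have ha_fin : (∫⁻ x, ENNReal.ofReal (-Real.log (p x / p₀ x)) ∂P₀) ≠ ⊤ := by
    apply ne_top_of_le_ne_top hfin.ne
    apply lintegral_mono_ae
    filter_upwards [haep, haep₀] with x hx hx₀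
    apply ENNReal.ofReal_le_ofReal
    have h1 : -Real.log (p x / p₀ x) = Real.log (p₀ x / p x) := by
      rw [← Real.log_inv]
      congr 1
      field_simp
    rw [h1]
    have h2 := Real.log_le_sub_one_of_pos (show 0 < p₀ x / p x by positivity)
    linarith
  by_cases hb_top : (∫⁻ x, ENNReal.ofReal (Real.log (p x / p₀ x)) ∂P₀) = ⊤
  · rw [hb_top, EReal.coe_ennreal_top, sub_eq_add_neg, EReal.neg_top, EReal.add_bot]
    exact bot_le
  -- main case: b finite
  -- withDensity transfer machinery
  have hp₀n_m : Measurable fun x => Real.toNNReal (p₀ x) := hp₀.real_toNNReal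
  have hP₀d : P₀ = μ.withDensity fun x => ((Real.toNNReal (p₀ x)) : ℝ≥0∞) := hP₀
  have hsmul_eq : ∀ φ : X → ℝ,
      (fun x => Real.toNNReal (p₀ x) • φ x) = fun x => p₀ x * φ x := by
    intro φ
    funext x
    rw [NNReal.smul_def, Real.coe_toNNReal _ (hp₀nn x), smul_eq_mul]
  have hint_iff : ∀ φ : X → ℝ, Integrable φ P₀ ↔ Integrable (fun x => p₀ x * φ x) μ := by
    intro φ
    rw [hP₀d, integrable_withDensity_iff_integrable_smul hp₀n_m, hsmul_eq]
  have hInt_eq : ∀ φ : X → ℝ, ∫ x, φ x ∂P₀ = ∫ x, p₀ x * φ x ∂μ := by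
    intro φ
    rw [hP₀d, integral_withDensity_eq_integral_smul hp₀n_m, hsmul_eq]
  -- u integrable with ∫ u ∂P₀ = ∫ √(p p₀) ∂μ
  have hu_p₀ : ∀ x, p₀ x * u x = Real.sqrt (p x * p₀ x) := by
    intro x
    rcases (hp₀nn x).eq_or_lt with h0 | h0
    · simp [hu_def, ← h0]
    · have hs0' : Real.sqrt (p₀ x) ≠ 0 := by
        have := Real.sqrt_pos.mpr h0
        positivity
      have h1 : u x = Real.sqrt (p x) / Real.sqrt (p₀ x) := by
        rw [hu_def]
        exact Real.sqrt_div (hpnn x) _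
      rw [h1, Real.sqrt_mul (hpnn x)]
      field_simp
      rw [Real.sq_sqrt h0.le]
      ring
  have h_int_u : Integrable u P₀ := by
    rw [hint_iff]
    exact h_int_q.congr (Filter.Eventually.of_forall fun x => (hu_p₀ x).symm)
  have hIu : ∫ x, u x ∂P₀ = ∫ x, Real.sqrt (p x * p₀ x) ∂μ := by
    rw [hInt_eq u]
    exact integral_congr_ae (Filter.Eventually.of_forall hu_p₀)
  -- (1-u)² integrable and ∫ (1-u)² ∂P₀ ≤ Hr
  have hone_u_pt : ∀ x, p₀ x * (1 - u x)^2 ≤ (Real.sqrt (p x) - Real.sqrt (p₀ x))^2 := by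
    intro x
    rcases (hp₀nn x).eq_or_lt with h0 | h0
    · rw [← h0]
      simpa using sq_nonneg (Real.sqrt (p x) - Real.sqrt (p₀ x))
    · have hu_eq : Real.sqrt (p₀ x) * u x = Real.sqrt (p x) := by
        rw [hu_def, ← Real.sqrt_mul h0.le]
        congr 1
        field_simp
      have h2 : (Real.sqrt (p x) - Real.sqrt (p₀ x))^2
          = (Real.sqrt (p₀ x))^2 * (1 - u x)^2 := by
        rw [← hu_eq]
        ring
      rw [h2, Real.sq_sqrt h0.le]
  have h_int_ou : Integrable (fun x => (1 - u x)^2) P₀ := by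
    rw [hint_iff]
    refine Integrable.mono h_int_hel
      ((hp₀.mul ((measurable_const.sub hu_m).pow_const 2)).aestronglyMeasurable) ?_
    apply Filter.Eventually.of_forall
    intro x
    rw [Real.norm_eq_abs, Real.norm_eq_abs,
      abs_of_nonneg (mul_nonneg (hp₀nn x) (sq_nonneg _)), abs_of_nonneg (sq_nonneg _)]
    exact hone_u_pt x
  have hIou_le : ∫ x, (1 - u x)^2 ∂P₀ ≤ Hr := by
    rw [hInt_eq]
    refine integral_mono ?_ h_int_hel (fun x => hone_u_pt x)
    rw [← hint_iff]
    exact h_int_ou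
  have hIou_nonneg : 0 ≤ ∫ x, (1 - u x)^2 ∂P₀ := integral_nonneg (fun x => sq_nonneg _)
  -- f integrable
  have hnorm_split : ∀ x : X, (‖-Real.log (p x / p₀ x)‖₊ : ℝ≥0∞)
      = ENNReal.ofReal (-Real.log (p x / p₀ x)) + ENNReal.ofReal (Real.log (p x / p₀ x)) := by
    intro x
    set r := Real.log (p x / p₀ x) with hr
    rcases le_or_gt 0 r with h | h
    · rw [nnnorm_neg, ← enorm_eq_nnnorm, Real.enorm_eq_ofReal h,
        ENNReal.ofReal_of_nonpos (neg_nonpos.mpr h), zero_add]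
    · rw [← enorm_eq_nnnorm, Real.enorm_eq_ofReal (by linarith : (0:ℝ) ≤ -r),
        ENNReal.ofReal_of_nonpos h.le, add_zero]
  have hf_fin : Integrable (fun x => -Real.log (p x / p₀ x)) P₀ := by
    refine ⟨hf_m.aestronglyMeasurable, ?_⟩
    rw [hasFiniteIntegral_def]
    calc ∫⁻ x, (‖-Real.log (p x / p₀ x)‖₊ : ℝ≥0∞) ∂P₀
        = ∫⁻ x, (ENNReal.ofReal (-Real.log (p x / p₀ x))
            + ENNReal.ofReal (Real.log (p x / p₀ x))) ∂P₀ :=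
          lintegral_congr hnorm_split
      _ = (∫⁻ x, ENNReal.ofReal (-Real.log (p x / p₀ x)) ∂P₀)
            + ∫⁻ x, ENNReal.ofReal (Real.log (p x / p₀ x)) ∂P₀ :=
          lintegral_add_left (ENNReal.measurable_ofReal.comp hf_m) _
      _ < ⊤ := ENNReal.add_lt_top.mpr ⟨ha_fin.lt_top, lt_top_iff_ne_top.mpr hb_top⟩
  -- a.e. identity f = g + (2 - 2u)
  have hfg_ae : (fun x => -Real.log (p x / p₀ x))
      =ᵐ[P₀] fun x => g x + (2 - 2 * u x) := by
    filter_upwards [haep, haep₀] with x hx hx₀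
    have hdiv : 0 < p x / p₀ x := by positivity
    have hu0 : 0 < u x := Real.sqrt_pos.mpr hdiv
    have hu2 : u x ^ 2 = p x / p₀ x := Real.sq_sqrt hdiv.le
    have hlog : Real.log (p x / p₀ x) = 2 * Real.log (u x) := by
      rw [← hu2, Real.log_pow]
      push_cast
      ring
    simp only [hg_def]
    rw [hlog]
    ring
  have h_int_g : Integrable g P₀ := by
    refine Integrable.congr (hf_fin.sub ((integrable_const (2:ℝ)).sub (h_int_u.const_mul 2))) ?_
    filter_upwards [hfg_ae] with x hx
    have hx' : -Real.log (p x / p₀ x) = g x + (2 - 2 * u x) := hx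
    show -Real.log (p x / p₀ x) - (2 - 2 * u x) = g x
    linarith [hx']
  have hIf : ∫ x, (-Real.log (p x / p₀ x)) ∂P₀ = (∫ x, g x ∂P₀) + Hr := by
    rw [integral_congr_ae hfg_ae]
    have hrest : Integrable (fun x => 2 - 2 * u x) P₀ :=
      (integrable_const (2:ℝ)).sub (h_int_u.const_mul 2)
    rw [integral_add h_int_g hrest]
    congr 1
    rw [integral_sub (integrable_const (2:ℝ)) (h_int_u.const_mul 2),
      integral_const, integral_const_mul, hIu, hHr_eq]
    rw [probReal_univ, one_smul]
  -- the set A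
  set A : Set X := {x | (1 + s) ^ 2 ≤ p₀ x / p x} with hA_def
  have hA_meas : MeasurableSet A := measurableSet_le measurable_const (hp₀.div hp)
  have hs1' : (0:ℝ) < 1 + s := by linarith
  -- pointwise bound on the complement of A
  have hAc_bound : ∀ᵐ x ∂P₀, x ∈ Aᶜ → g x ≤ 2*(1 - u x)^2 := by
    filter_upwards [haep, haep₀] with x hx hx₀ hxA
    have hlt : p₀ x / p x < (1 + s)^2 := by
      by_contra hcon
      exact hxA (le_of_not_gt hcon)
    have h94 : p₀ x < 9/4 * p x := by
      have h1 : (1+s)^2 ≤ 9/4 := by nlinarith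
      have := lt_of_lt_of_le hlt h1
      rwa [div_lt_iff₀ hx] at this
    have h49 : (4:ℝ)/9 ≤ p x / p₀ x := by
      rw [le_div_iff₀ hx₀]
      linarith
    have hu23 : (2:ℝ)/3 ≤ u x := by
      have h2 : ((2:ℝ)/3)^2 ≤ p x / p₀ x := by
        norm_num
        linarith
      calc (2:ℝ)/3 = Real.sqrt (((2:ℝ)/3)^2) := (Real.sqrt_sq (by norm_num)).symm
        _ ≤ u x := Real.sqrt_le_sqrt h2
    simpa [hg_def] using helperP1 hu23
  -- pointwise bounds on A
  have hA_bound : ∀ᵐ x ∂P₀, x ∈ A →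
      (g x ≤ 2*(1 - u x)^2 + (1+s)^2/(4*s)*(1 - u x)^2 + s/(4*(1+s)^2)*(p₀ x / p x)
        ∧ s/(1+s) ≤ 1 - u x) := by
    filter_upwards [haep, haep₀] with x hx hx₀ hxA
    have hge : (1 + s)^2 ≤ p₀ x / p x := hxA
    have hdiv : 0 < p x / p₀ x := by positivity
    have hu0 : 0 < u x := Real.sqrt_pos.mpr hdiv
    have hu2 : u x ^ 2 = p x / p₀ x := Real.sq_sqrt hdiv.le
    have hple : p x / p₀ x ≤ (1/(1+s))^2 := by
      have h1 : (1+s)^2 * p x ≤ p₀ x := by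
        rw [le_div_iff₀ hx] at hge
        linarith
      rw [div_le_iff₀ hx₀, div_pow, one_pow, div_mul_eq_mul_div, le_div_iff₀ (by positivity)]
      nlinarith
    have hule : u x ≤ 1/(1+s) := by
      calc u x = Real.sqrt (p x / p₀ x) := rfl
        _ ≤ Real.sqrt ((1/(1+s))^2) := Real.sqrt_le_sqrt hple
        _ = 1/(1+s) := Real.sqrt_sq (by positivity)
    have hrinv : (u x ^ 2)⁻¹ = p₀ x / p x := by
      rw [hu2, inv_div]
    constructor
    · have := helperP2 hu0 hs0 hs1 hule
      rw [hrinv] at this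
      simpa [hg_def] using this
    · have h2 : s/(1+s) = 1 - 1/(1+s) := by field_simp; ring
      rw [h2]
      linarith
  -- complement estimate
  have hAc_est : ∫ x in Aᶜ, g x ∂P₀ ≤ 2 * ∫ x in Aᶜ, (1 - u x)^2 ∂P₀ := by
    rw [← integral_const_mul]
    apply setIntegral_mono_ae_restrict h_int_g.integrableOn
      ((h_int_ou.const_mul 2).integrableOn)
    exact (ae_restrict_iff' hA_meas.compl).mpr hAc_bound
  -- estimate on A
  have hA_est : ∫ x in A, g x ∂P₀ ≤ (2 + M) * ∫ x in A, (1 - u x)^2 ∂P₀ := by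
    have hAou_nonneg : 0 ≤ ∫ x in A, (1 - u x)^2 ∂P₀ :=
      setIntegral_nonneg hA_meas (fun x _ => sq_nonneg _)
    by_cases hPA : P₀ A = 0
    · have h1 : ∫ x in A, g x ∂P₀ = 0 := by
        rw [Measure.restrict_eq_zero.mpr hPA]
        exact integral_zero_measure _
      rw [h1]
      positivity
    · rcases hcond with h0 | hineq
      · exact absurd h0 hPA
      have hPA_fin : P₀ A ≠ ⊤ := measure_ne_top _ _
      have hLA_fin : (∫⁻ x in A, ENNReal.ofReal (p₀ x / p x) ∂P₀) ≠ ⊤ :=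
        (lt_of_le_of_lt (setLIntegral_le_lintegral _ _) hfin).ne
      have hr_nonneg : ∀ x, (0:ℝ) ≤ p₀ x / p x := fun x => div_nonneg (hp₀nn x) (hpnn x)
      have h_int_r : IntegrableOn (fun x => p₀ x / p x) A P₀ := by
        refine ⟨(hp₀.div hp).aestronglyMeasurable, ?_⟩
        rw [hasFiniteIntegral_iff_ofReal (Filter.Eventually.of_forall hr_nonneg)]
        exact lt_top_iff_ne_top.mpr hLA_fin
      have hIA_eq : ∫ x in A, (p₀ x / p x) ∂P₀
          = (∫⁻ x in A, ENNReal.ofReal (p₀ x / p x) ∂P₀).toReal :=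
        integral_eq_lintegral_of_nonneg_ae (Filter.Eventually.of_forall hr_nonneg)
          (hp₀.div hp).aestronglyMeasurable
      have hIA_nonneg : 0 ≤ ∫ x in A, (p₀ x / p x) ∂P₀ :=
        setIntegral_nonneg hA_meas (fun x _ => hr_nonneg x)
      -- real form of the condition
      have hcr : c * ∫ x in A, (p₀ x / p x) ∂P₀ ≤ M * (P₀ A).toReal := by
        have h1 := ENNReal.toReal_mono (ENNReal.mul_ne_top ENNReal.ofReal_ne_top hPA_fin) hineq
        rw [ENNReal.toReal_mul, ENNReal.toReal_mul, ENNReal.toReal_ofReal hc0.le,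
          ENNReal.toReal_ofReal hM] at h1
        rw [hIA_eq]
        exact h1
      -- c (1+s)² ≤ M
      have hclow : c * (1+s)^2 ≤ M := by
        have hconst : ENNReal.ofReal ((1+s)^2) * P₀ A
            ≤ ∫⁻ x in A, ENNReal.ofReal (p₀ x / p x) ∂P₀ := by
          rw [← setLIntegral_const A (ENNReal.ofReal ((1+s)^2))]
          refine setLIntegral_mono (ENNReal.measurable_ofReal.comp (hp₀.div hp)) ?_
          intro x hx
          exact ENNReal.ofReal_le_ofReal hx
        have h2 : ENNReal.ofReal (c * (1+s)^2) * P₀ A ≤ ENNReal.ofReal M * P₀ A := by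
          rw [ENNReal.ofReal_mul hc0.le, mul_assoc]
          exact le_trans (mul_le_mul_right hconst _) hineq
        have h3 : ENNReal.ofReal (c * (1+s)^2) ≤ ENNReal.ofReal M :=
          (ENNReal.mul_le_mul_iff_left hPA hPA_fin).mp h2
        rwa [ENNReal.ofReal_le_ofReal_iff hM] at h3
      -- pointwise integral bound
      have hAle : ∫ x in A, g x ∂P₀
          ≤ ∫ x in A, (2*(1 - u x)^2 + (1+s)^2/(4*s)*(1 - u x)^2
              + s/(4*(1+s)^2)*(p₀ x / p x)) ∂P₀ := by
        refine setIntegral_mono_ae_restrict h_int_g.integrableOn ?_ ?_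
        · exact ((h_int_ou.integrableOn.const_mul 2).add
            (h_int_ou.integrableOn.const_mul _)).add (h_int_r.const_mul _)
        · refine (ae_restrict_iff' hA_meas).mpr ?_
          filter_upwards [hA_bound] with x hx hxA
          exact (hx hxA).1
      have hsplit3 : ∫ x in A, (2*(1 - u x)^2 + (1+s)^2/(4*s)*(1 - u x)^2
              + s/(4*(1+s)^2)*(p₀ x / p x)) ∂P₀
          = 2 * (∫ x in A, (1 - u x)^2 ∂P₀)
            + (1+s)^2/(4*s) * (∫ x in A, (1 - u x)^2 ∂P₀)
            + s/(4*(1+s)^2) * ∫ x in A, (p₀ x / p x) ∂P₀ := by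
        have hi1 : IntegrableOn (fun x => 2*(1 - u x)^2) A P₀ :=
          h_int_ou.integrableOn.const_mul 2
        have hi2 : IntegrableOn (fun x => (1+s)^2/(4*s)*(1 - u x)^2) A P₀ :=
          h_int_ou.integrableOn.const_mul _
        have hi3 : IntegrableOn (fun x => s/(4*(1+s)^2)*(p₀ x / p x)) A P₀ :=
          h_int_r.const_mul _
        have hi12 : IntegrableOn
            (fun x => 2*(1 - u x)^2 + (1+s)^2/(4*s)*(1 - u x)^2) A P₀ := hi1.add hi2
        rw [integral_add hi12 hi3, integral_add hi1 hi2,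
          integral_const_mul, integral_const_mul, integral_const_mul]
      -- lower bound on the (1-u)² integral
      have hPA_le : (s/(1+s))^2 * (P₀ A).toReal ≤ ∫ x in A, (1 - u x)^2 ∂P₀ := by
        have h1 : ∫ x in A, ((s/(1+s))^2 : ℝ) ∂P₀ = (P₀ A).toReal * (s/(1+s))^2 := by
          rw [setIntegral_const]
          simp [smul_eq_mul, Measure.real]
        rw [← mul_comm ((P₀ A).toReal) _, ← h1]
        refine setIntegral_mono_ae_restrict
          (integrableOn_const (measure_ne_top _ _))
          h_int_ou.integrableOn ?_
        refine (ae_restrict_iff' hA_meas).mpr ?_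
        filter_upwards [hA_bound] with x hx hxA
        have h2 := (hx hxA).2
        have h3 : 0 ≤ s/(1+s) := by positivity
        nlinarith
      -- term 1
      have hT1 : (1+s)^2/(4*s) * (∫ x in A, (1 - u x)^2 ∂P₀)
          ≤ M/2 * ∫ x in A, (1 - u x)^2 ∂P₀ := by
        apply mul_le_mul_of_nonneg_right _ hAou_nonneg
        have he : (1+s)^2/(4*s) = c*(1+s)^2/2 := by
          rw [hs_def]
          field_simp
          ring
        rw [he]
        linarith [hclow]
      -- term 2
      have hT2 : s/(4*(1+s)^2) * (∫ x in A, (p₀ x / p x) ∂P₀)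
          ≤ M/2 * ∫ x in A, (1 - u x)^2 ∂P₀ := by
        have hIr_le : ∫ x in A, (p₀ x / p x) ∂P₀ ≤ (M/c) * (P₀ A).toReal := by
          rw [div_mul_eq_mul_div, le_div_iff₀ hc0]
          linarith [hcr]
        calc s/(4*(1+s)^2) * (∫ x in A, (p₀ x / p x) ∂P₀)
            ≤ s/(4*(1+s)^2) * ((M/c) * (P₀ A).toReal) := by
              apply mul_le_mul_of_nonneg_left hIr_le (by positivity)
          _ = M/2 * ((s/(1+s))^2 * (P₀ A).toReal) := by
              rw [hs_def]
              field_simp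
              ring
          _ ≤ M/2 * ∫ x in A, (1 - u x)^2 ∂P₀ := by
              apply mul_le_mul_of_nonneg_left hPA_le (by linarith)
      calc ∫ x in A, g x ∂P₀
          ≤ 2 * (∫ x in A, (1 - u x)^2 ∂P₀)
            + (1+s)^2/(4*s) * (∫ x in A, (1 - u x)^2 ∂P₀)
            + s/(4*(1+s)^2) * ∫ x in A, (p₀ x / p x) ∂P₀ := by
              rw [← hsplit3]
              exact hAle
        _ ≤ (2 + M) * ∫ x in A, (1 - u x)^2 ∂P₀ := by linarith [hT1, hT2]
  -- combine both regions
  have hg_main : ∫ x, g x ∂P₀ ≤ (2+M) * ∫ x, (1 - u x)^2 ∂P₀ := by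
    have hsplit_g : ∫ x, g x ∂P₀
        = ∫ x in A, g x ∂P₀ + ∫ x in Aᶜ, g x ∂P₀ :=
      (integral_add_compl hA_meas h_int_g).symm
    have hsplit_ou : ∫ x, (1 - u x)^2 ∂P₀
        = ∫ x in A, (1 - u x)^2 ∂P₀ + ∫ x in Aᶜ, (1 - u x)^2 ∂P₀ :=
      (integral_add_compl hA_meas h_int_ou).symm
    have hc_nonneg : 0 ≤ ∫ x in Aᶜ, (1 - u x)^2 ∂P₀ :=
      setIntegral_nonneg hA_meas.compl (fun x _ => sq_nonneg _)
    rw [hsplit_g, hsplit_ou]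
    nlinarith [mul_nonneg hM hc_nonneg, hAc_est, hA_est]
  -- final real bound
  have hfinal : ∫ x, (-Real.log (p x / p₀ x)) ∂P₀ ≤ (3+M) * Hr := by
    rw [hIf]
    have h1 : (2+M) * ∫ x, (1 - u x)^2 ∂P₀ ≤ (2+M) * Hr :=
      mul_le_mul_of_nonneg_left hIou_le (by linarith)
    linarith [hg_main]
  -- EReal conclusion
  have hab := integral_eq_lintegral_pos_part_sub_lintegral_neg_part hf_fin
  simp only [neg_neg] at hab
  have hcoe : ∀ y : ℝ≥0∞, y ≠ ⊤ → ((y : EReal)) = ((y.toReal : ℝ) : EReal) := by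
    intro y hy
    conv_lhs => rw [← ENNReal.ofReal_toReal hy]
    rw [EReal.coe_ennreal_ofReal, max_eq_left ENNReal.toReal_nonneg]
  have hHrE : ((∫⁻ x, ENNReal.ofReal ((Real.sqrt (p x) - Real.sqrt (p₀ x))^2) ∂μ : ℝ≥0∞) : EReal)
      = ((Hr : ℝ) : EReal) := by
    rw [hHL, EReal.coe_ennreal_ofReal, max_eq_left hHr_nonneg]
  rw [hcoe _ ha_fin, hcoe _ hb_top, hHrE, ← EReal.coe_sub, ← EReal.coe_mul,
    EReal.coe_le_coe_iff, ← hab]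
  exact hfinal
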